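/- Let G be a simple graph with no triangles and no 4-cycles. Then for every vertex u, the sum of the degrees of the neighbors of u is at most n - 1, where n is the number of vertices of G. -/

import Mathlib

open SimpleGraph Finset Matrix

/-- Largest eigenvalue of a real matrix, as the supremum of its (real) eigenvalues. -/
noncomputable def maxEig {V : Type*} [Fintype V] (A : Matrix V V ℝ) : ℝ :=
  sSup {μ : ℝ | ∃ v : V → ℝ, v ≠ 0 ∧ A.mulVec v = μ • v}

/-- The eigenvalues of a real matrix with multiplicity, sorted increasingly
(the real roots of the characteristic polynomial). -/
noncomputable def eigsSorted {V : Type*} [Fintype V] [DecidableEq V]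
    (A : Matrix V V ℝ) : List ℝ :=
  A.charpoly.roots.sort (· ≤ ·)

/-- The second smallest eigenvalue (with multiplicity) of a real matrix. -/
noncomputable def secondEig {V : Type*} [Fintype V] [DecidableEq V]
    (A : Matrix V V ℝ) : ℝ :=
  (eigsSorted A).getD 1 0

/-- `G` has no triangles. -/
def TriangleFree {V : Type*} (G : SimpleGraph V) : Prop :=
  ∀ a b c : V, G.Adj a b → G.Adj b c → G.Adj c a → False

/-- `G` has no 4-cycles. -/
def C4Free {V : Type*} (G : SimpleGraph V) : Prop :=
  ∀ a b c d : V, a ≠ c → b ≠ d →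
    G.Adj a b → G.Adj b c → G.Adj c d → G.Adj d a → False

/-- `X` is a dominating set of `G`. -/
def IsDominatingSet {V : Type*} (G : SimpleGraph V) (X : Finset V) : Prop :=
  ∀ v : V, v ∉ X → ∃ u ∈ X, G.Adj u v

/-- The domination number of `G`. -/
noncomputable def domNum {V : Type*} [Fintype V] (G : SimpleGraph V) : ℕ :=
  sInf {k : ℕ | ∃ X : Finset V, IsDominatingSet G X ∧ X.card = k}

/-- Number of edges between `X` and its complement. -/
def crossEdges {V : Type*} [Fintype V] [DecidableEq V] (G : SimpleGraph V)
    [DecidableRel G.Adj] (X : Finset V) : ℕ :=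
  (Finset.univ.filter fun p : V × V => p.1 ∈ X ∧ p.2 ∉ X ∧ G.Adj p.1 p.2).card

theorem stmt_2 {V : Type*} [Fintype V] [DecidableEq V] (G : SimpleGraph V)
    [DecidableRel G.Adj] (h3 : TriangleFree G) (h4 : C4Free G) (u : V) :
    ∑ v ∈ G.neighborFinset u, G.degree v ≤ Fintype.card V - 1 := by
  classical
  set N := G.neighborFinset u with hN
  -- S v = neighbors of v other than u
  set S : V → Finset V := fun v => (G.neighborFinset v).erase u with hS
  have hdisj : (N : Set V).PairwiseDisjoint S := by
    intro a ha b hb hab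
    simp only [Finset.coe_mem, Finset.mem_coe, hN, SimpleGraph.mem_neighborFinset] at ha hb
    refine Finset.disjoint_left.2 ?_
    intro x hxa hxb
    simp only [hS, Finset.mem_erase, SimpleGraph.mem_neighborFinset] at hxa hxb
    exact h4 a x b u hab hxa.1 hxa.2 (G.adj_symm hxb.2) (G.adj_symm hb) ha
  have hsub : N.biUnion S ⊆ Finset.univ \ insert u N := by
    intro x hx
    simp only [Finset.mem_biUnion] at hx
    obtain ⟨v, hv, hxv⟩ := hx
    simp only [hN, SimpleGraph.mem_neighborFinset] at hv
    simp only [hS, Finset.mem_erase, SimpleGraph.mem_neighborFinset] at hxv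
    simp only [Finset.mem_sdiff, Finset.mem_univ, Finset.mem_insert, true_and, hN,
      SimpleGraph.mem_neighborFinset]
    push_neg
    refine ⟨hxv.1, fun hux => ?_⟩
    exact h3 u v x hv hxv.2 (G.adj_symm hux)
  have hcardS : ∀ v ∈ N, (S v).card = G.degree v - 1 := by
    intro v hv
    simp only [hN, SimpleGraph.mem_neighborFinset] at hv
    have hu : u ∈ G.neighborFinset v := by
      simp [SimpleGraph.mem_neighborFinset, G.adj_symm hv]
    have : (S v).card = (G.neighborFinset v).card - 1 := Finset.card_erase_of_mem hu
    rw [this]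
    rfl
  have hdeg1 : ∀ v ∈ N, 1 ≤ G.degree v := by
    intro v hv
    simp only [hN, SimpleGraph.mem_neighborFinset] at hv
    have hu : u ∈ G.neighborFinset v := by
      simp [SimpleGraph.mem_neighborFinset, G.adj_symm hv]
    exact Finset.card_pos.2 ⟨u, hu⟩
  have hsum : ∑ v ∈ N, (S v).card = (N.biUnion S).card :=
    (Finset.card_biUnion (fun a ha b hb hab => hdisj ha hb hab)).symm
  have hunotN : u ∉ N := by simp [hN]
  have hcard2 : (Finset.univ \ insert u N).card = Fintype.card V - (N.card + 1) := by
    rw [Finset.card_sdiff_of_subset (Finset.subset_univ _), Finset.card_insert_of_notMem hunotN,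
      Finset.card_univ, Nat.add_comm]
  have hle : N.card + 1 ≤ Fintype.card V := by
    rw [← Finset.card_insert_of_notMem hunotN, ← Finset.card_univ]
    exact Finset.card_le_card (Finset.subset_univ _)
  have key : ∑ v ∈ N, (G.degree v - 1) ≤ Fintype.card V - (N.card + 1) := by
    calc ∑ v ∈ N, (G.degree v - 1) = ∑ v ∈ N, (S v).card :=
          Finset.sum_congr rfl (fun v hv => (hcardS v hv).symm)
      _ = (N.biUnion S).card := hsum
      _ ≤ (Finset.univ \ insert u N).card := Finset.card_le_card hsub
      _ = Fintype.card V - (N.card + 1) := hcard2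
  have hsplit : ∑ v ∈ N, G.degree v = (∑ v ∈ N, (G.degree v - 1)) + N.card := by
    have h : ∑ v ∈ N, G.degree v = ∑ v ∈ N, ((G.degree v - 1) + 1) :=
      Finset.sum_congr rfl (fun v hv => (Nat.sub_add_cancel (hdeg1 v hv)).symm)
    rw [h, Finset.sum_add_distrib, Finset.sum_const, smul_eq_mul, mul_one]
  rw [hsplit]
  omega
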